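/- For every α ∈ (0,1) and every δ ≥ 0, Φ(Φ^{−1}(α/2) − δ) ≤ α·Φ(−δ). -/

import Mathlib

open Real MeasureTheory Set Filter

/-- The standard normal cumulative distribution function. -/
noncomputable def stdNormalCDF (x : ℝ) : ℝ :=
  ∫ t in Set.Iic x, (Real.sqrt (2 * Real.pi))⁻¹ * Real.exp (-(t ^ 2) / 2)

/-- The inverse `Φ^{−1}` of the standard normal cdf on `(0,1)`. -/
noncomputable def stdNormalCDFInv (p : ℝ) : ℝ :=
  Function.invFun stdNormalCDF p

noncomputable def phiAux (x : ℝ) : ℝ := (Real.sqrt (2 * Real.pi))⁻¹ * Real.exp (-(x ^ 2) / 2)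

lemma phiAux_pos (x : ℝ) : 0 < phiAux x :=
  mul_pos (inv_pos.2 (Real.sqrt_pos.2 (by positivity))) (Real.exp_pos _)

lemma phiAux_eq : phiAux = fun x => (Real.sqrt (2 * Real.pi))⁻¹ * Real.exp (-2⁻¹ * x ^ 2) := by
  funext x; unfold phiAux; congr 1; ring_nf

lemma integrable_phiAux : Integrable phiAux := by
  rw [phiAux_eq]
  exact (integrable_exp_neg_mul_sq (by norm_num : (0:ℝ) < 2⁻¹)).const_mul _

lemma continuous_phiAux : Continuous phiAux := by
  unfold phiAux; fun_prop

lemma hasDerivAt_phiAux (x : ℝ) : HasDerivAt phiAux (-x * phiAux x) x := by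
  have h1 : HasDerivAt (fun t : ℝ => -(t ^ 2) / 2) (-x) x := by
    have h := ((hasDerivAt_pow 2 x).neg).div_const 2
    refine h.congr_deriv ?_
    ring
  have := (h1.exp).const_mul ((Real.sqrt (2 * Real.pi))⁻¹)
  refine this.congr_deriv ?_
  unfold phiAux; ring

lemma stdNormalCDF_def (x : ℝ) : stdNormalCDF x = ∫ t in Set.Iic x, phiAux t := rfl

lemma hasDerivAt_cdf (x : ℝ) : HasDerivAt stdNormalCDF (phiAux x) x := by
  have key : stdNormalCDF = fun y => (∫ t in (0:ℝ)..y, phiAux t) + stdNormalCDF 0 := by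
    funext y
    rw [stdNormalCDF_def]
    have := intervalIntegral.integral_Iic_sub_Iic (μ := volume)
      integrable_phiAux.integrableOn integrable_phiAux.integrableOn (a := (0:ℝ)) (b := y)
    rw [stdNormalCDF_def]
    linarith [this]
  rw [key]
  exact (intervalIntegral.integral_hasDerivAt_right
    integrable_phiAux.intervalIntegrable
    (continuous_phiAux.stronglyMeasurableAtFilter _ _)
    continuous_phiAux.continuousAt).add_const _

lemma continuous_cdf : Continuous stdNormalCDF :=
  continuous_iff_continuousAt.2 fun x => (hasDerivAt_cdf x).continuousAt

lemma cdf_mono : Monotone stdNormalCDF :=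
  monotone_of_deriv_nonneg (fun x => (hasDerivAt_cdf x).differentiableAt)
    (fun x => by rw [(hasDerivAt_cdf x).deriv]; exact (phiAux_pos x).le)

lemma cdf_pos (x : ℝ) : 0 < stdNormalCDF x := by
  rw [stdNormalCDF_def]
  rw [setIntegral_pos_iff_support_of_nonneg_ae
    (Filter.Eventually.of_forall fun t => (phiAux_pos t).le) integrable_phiAux.integrableOn]
  have hs : Function.support phiAux ∩ Iic x = Iic x := by
    rw [inter_eq_right]
    intro t _
    exact (phiAux_pos t).ne'
  rw [hs, Real.volume_Iic]
  simp

lemma integral_total : ∫ t, phiAux t = 1 := by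
  rw [phiAux_eq]
  rw [MeasureTheory.integral_const_mul]
  have : ∫ x : ℝ, Real.exp (-2⁻¹ * x ^ 2) = Real.sqrt (Real.pi / 2⁻¹) := integral_gaussian 2⁻¹
  rw [this]
  have h2 : Real.pi / 2⁻¹ = 2 * Real.pi := by ring
  rw [h2]
  exact inv_mul_cancel₀ (Real.sqrt_ne_zero'.2 (by positivity))

lemma cdf_zero : stdNormalCDF 0 = 1 / 2 := by
  have heven : ∀ x : ℝ, phiAux (-x) = phiAux x := fun x => by unfold phiAux; rw [neg_pow]; ring_nf
  have h1 : stdNormalCDF 0 = ∫ t in Ioi (0:ℝ), phiAux t := by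
    rw [stdNormalCDF_def]
    have h := integral_comp_neg_Iic (0:ℝ) phiAux
    rw [neg_zero] at h
    rw [← h]
    exact setIntegral_congr_fun measurableSet_Iic fun t _ => (heven t).symm
  have h2 : (∫ t in Iic (0:ℝ), phiAux t) + ∫ t in Ioi (0:ℝ), phiAux t = 1 := by
    rw [intervalIntegral.integral_Iic_add_Ioi integrable_phiAux.integrableOn
      integrable_phiAux.integrableOn, integral_total]
  rw [stdNormalCDF_def] at h1 ⊢
  linarith [h1, h2]

lemma integrable_id_mul_phiAux : Integrable (fun t : ℝ => t * phiAux t) := by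
  rw [phiAux_eq]
  have h := (integrable_mul_exp_neg_mul_sq (by norm_num : (0:ℝ) < 2⁻¹)).const_mul
    ((Real.sqrt (2 * Real.pi))⁻¹)
  exact h.congr (Filter.Eventually.of_forall fun t => by ring)

lemma tendsto_phiAux_atBot : Filter.Tendsto phiAux atBot (nhds 0) := by
  rw [phiAux_eq]
  have hsq : Filter.Tendsto (fun x : ℝ => x ^ 2) atBot atTop := by
    have habs : Filter.Tendsto (fun x : ℝ => |x|) atBot atTop := tendsto_abs_atBot_atTop
    have h := (tendsto_pow_atTop (n := 2) (by norm_num)).comp habs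
    exact h.congr fun x => by rw [Function.comp_apply, sq_abs]
  have h1 : Filter.Tendsto (fun x : ℝ => -2⁻¹ * x ^ 2) atBot atBot := by
    have h2 := hsq.const_mul_atTop (show (0:ℝ) < 2⁻¹ by norm_num)
    have h3 := tendsto_neg_atTop_atBot.comp h2
    exact h3.congr fun x => by simp [Function.comp_apply]
  have h4 := Real.tendsto_exp_atBot.comp h1
  simpa using h4.const_mul ((Real.sqrt (2 * Real.pi))⁻¹)

lemma integral_id_mul_phiAux (x : ℝ) : ∫ t in Set.Iic x, t * phiAux t = -phiAux x := by
  have hderiv : ∀ t ∈ Set.Iic x, HasDerivAt (fun s => -phiAux s) (t * phiAux t) t := by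
    intro t _
    have := (hasDerivAt_phiAux t).neg
    refine this.congr_deriv ?_
    ring
  have := MeasureTheory.integral_Iic_of_hasDerivAt_of_tendsto' hderiv
    integrable_id_mul_phiAux.integrableOn tendsto_phiAux_atBot.neg
  simpa using this

lemma mills_bound {x : ℝ} (hx : x < 0) : stdNormalCDF x ≤ phiAux x / (-x) := by
  have hle : stdNormalCDF x ≤ ∫ t in Set.Iic x, (t / x) * phiAux t := by
    rw [stdNormalCDF_def]
    refine setIntegral_mono_on integrable_phiAux.integrableOn ?_ measurableSet_Iic ?_
    · exact (integrable_id_mul_phiAux.const_mul x⁻¹).congr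
        (Filter.Eventually.of_forall fun t => by ring) |>.integrableOn
    · intro t ht
      have h1 : 1 ≤ t / x := by
        rw [le_div_iff_of_neg hx]
        simpa using ht
      nlinarith [phiAux_pos t]
  have heq : ∫ t in Set.Iic x, (t / x) * phiAux t = x⁻¹ * ∫ t in Set.Iic x, t * phiAux t := by
    rw [← integral_const_mul]
    exact setIntegral_congr_fun measurableSet_Iic fun t _ => by ring
  rw [heq, integral_id_mul_phiAux] at hle
  calc stdNormalCDF x ≤ x⁻¹ * -phiAux x := hle
    _ = phiAux x / (-x) := by rw [div_neg]; field_simp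

lemma mills_nonneg (x : ℝ) : 0 ≤ phiAux x + x * stdNormalCDF x := by
  rcases le_or_gt 0 x with hx | hx
  · have := (phiAux_pos x).le
    nlinarith [(cdf_pos x).le]
  · have h := mills_bound hx
    have hx' : 0 < -x := by linarith
    have h2 := (le_div_iff₀ hx').1 h
    nlinarith [h2]

lemma hasDerivAt_hazard (x : ℝ) :
    HasDerivAt (fun y => phiAux y / stdNormalCDF y)
      ((-x * phiAux x * stdNormalCDF x - phiAux x * phiAux x) / stdNormalCDF x ^ 2) x :=
  (hasDerivAt_phiAux x).div (hasDerivAt_cdf x) (cdf_pos x).ne'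

lemma hazard_antitone : Antitone (fun y => phiAux y / stdNormalCDF y) := by
  apply antitone_of_deriv_nonpos
  · exact fun x => (hasDerivAt_hazard x).differentiableAt
  · intro x
    rw [(hasDerivAt_hazard x).deriv]
    apply div_nonpos_of_nonpos_of_nonneg _ (sq_nonneg _)
    nlinarith [mills_nonneg x, phiAux_pos x, (cdf_pos x).le]

lemma log_ratio_mono {b : ℝ} (hb : b ≤ 0) :
    Monotone (fun a => Real.log (stdNormalCDF (a + b)) - Real.log (stdNormalCDF a)) := by
  have hD : ∀ a : ℝ, HasDerivAt (fun a => Real.log (stdNormalCDF (a + b)) -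
      Real.log (stdNormalCDF a))
      (phiAux (a + b) / stdNormalCDF (a + b) - phiAux a / stdNormalCDF a) a := by
    intro a
    have h1 : HasDerivAt (fun a : ℝ => stdNormalCDF (a + b)) (phiAux (a + b)) a := by
      have := (hasDerivAt_cdf (a + b)).comp a ((hasDerivAt_id a).add_const b)
      exact this.congr_deriv (mul_one _)
    have h2 := h1.log (cdf_pos (a + b)).ne'
    have h3 := (hasDerivAt_cdf a).log (cdf_pos a).ne'
    exact h2.sub h3
  apply monotone_of_deriv_nonneg (fun a => (hD a).differentiableAt)
  intro a
  rw [(hD a).deriv]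
  have := hazard_antitone (show a + b ≤ a by linarith)
  linarith

/-- For every `α ∈ (0,1)` and every `δ ≥ 0`, `Φ(Φ^{−1}(α/2) − δ) ≤ α·Φ(−δ)`. -/
theorem stmt_14 (α : ℝ) (hα : α ∈ Set.Ioo (0 : ℝ) 1) (δ : ℝ) (hδ : 0 ≤ δ) :
    stdNormalCDF (stdNormalCDFInv (α / 2) - δ) ≤ α * stdNormalCDF (-δ) := by
  obtain ⟨hα0, hα1⟩ := hα
  set c : ℝ := (Real.sqrt (2 * Real.pi))⁻¹ with hc
  have hc0 : 0 < c := inv_pos.2 (Real.sqrt_pos.2 (by positivity))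
  -- find a point where the CDF is below α/2
  set x₀ : ℝ := -(2 * c / α + 1) with hx₀
  have hx₀neg : x₀ < 0 := by
    have : 0 < 2 * c / α := by positivity
    rw [hx₀]; linarith
  have hbound : stdNormalCDF x₀ < α / 2 := by
    have h1 := mills_bound hx₀neg
    have h2 : phiAux x₀ ≤ c := by
      have : Real.exp (-(x₀ ^ 2) / 2) ≤ 1 := Real.exp_le_one_iff.2 (by nlinarith [sq_nonneg x₀])
      calc phiAux x₀ = c * Real.exp (-(x₀ ^ 2) / 2) := rfl
        _ ≤ c * 1 := by nlinarith
        _ = c := mul_one c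
    have hx' : (0:ℝ) < -x₀ := by linarith
    have h3 : phiAux x₀ / (-x₀) ≤ c / (-x₀) := by
      gcongr
    have h4 : c / (-x₀) < α / 2 := by
      rw [div_lt_iff₀ hx']
      have : -x₀ = 2 * c / α + 1 := by rw [hx₀]; ring
      rw [this]
      have hdiv : α * (2 * c / α) = 2 * c := by field_simp
      nlinarith [hdiv]
    linarith
  -- intermediate value theorem
  have hcdf0 : stdNormalCDF 0 = 1 / 2 := cdf_zero
  have hmem : α / 2 ∈ Set.Icc (stdNormalCDF x₀) (stdNormalCDF 0) := by
    constructor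
    · linarith
    · rw [hcdf0]; linarith
  obtain ⟨q, hq, hΦq⟩ := intermediate_value_Icc hx₀neg.le continuous_cdf.continuousOn hmem
  -- properties of the inverse
  have hinv : stdNormalCDF (stdNormalCDFInv (α / 2)) = α / 2 := by
    unfold stdNormalCDFInv
    exact Function.invFun_eq ⟨q, hΦq⟩
  set q' := stdNormalCDFInv (α / 2) with hq'
  have hq'0 : q' ≤ 0 := by
    by_contra h
    push_neg at h
    have := cdf_mono h.le
    rw [hinv, hcdf0] at this
    linarith
  -- apply the key monotonicity
  have hkey := log_ratio_mono hq'0 (show -δ ≤ 0 by linarith)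
  simp only at hkey
  rw [zero_add, hinv, hcdf0] at hkey
  have hrw : -δ + q' = q' - δ := by ring
  rw [hrw] at hkey
  -- hkey : log Φ(q'-δ) - log Φ(-δ) ≤ log (α/2) - log (1/2)
  have hp1 : 0 < stdNormalCDF (q' - δ) := cdf_pos _
  have hp2 : 0 < stdNormalCDF (-δ) := cdf_pos _
  have hgoal : Real.log (stdNormalCDF (q' - δ)) ≤ Real.log (α * stdNormalCDF (-δ)) := by
    rw [Real.log_mul (by linarith) hp2.ne']
    have hlog : Real.log (α / 2) - Real.log (1 / 2) = Real.log α := by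
      rw [Real.log_div (by linarith) (by norm_num), Real.log_div (by norm_num) (by norm_num)]
      simp
    linarith [hkey, hlog]
  have := Real.exp_le_exp.2 hgoal
  rwa [Real.exp_log hp1, Real.exp_log (by positivity)] at this
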